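/- Let m_K be the pushforward under l of Lebesgue measure on [0,1). Then: (a) m_K is non-atomic, i.e. m_K({y}) = 0 for every y ∈ K; and (b) m_K is invariant under any homeomorphism T : K → K satisfying T(l(x)) = l(F(x)) for all x ∈ (0,1), i.e. m_K(T⁻¹(B)) = m_K(B) for every Borel set B ⊆ K. -/

import Mathlib

open MeasureTheory

theorem statement2 (d : ℕ) (hd : 1 ≤ d) (x : Fin (d + 1) → ℝ)
    (hx0 : x 0 = 0) (hxd : x (Fin.last d) = 1) (hxmono : StrictMono x)
    (F G : ℝ → ℝ)
    (hbij : Set.BijOn F (Set.Ico 0 1) (Set.Ico 0 1))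
    (hinv : Set.InvOn G F (Set.Ico 0 1) (Set.Ico 0 1))
    (htrans : ∀ i : Fin d, ∃ c : ℝ,
      ∀ y ∈ Set.Ico (x i.castSucc) (x i.succ), F y = y + c)
    (hKeane : ∀ i : Fin d, ∀ n : ℕ, 1 ≤ n →
      F^[n] (x i.castSucc) ∉
        {y : ℝ | ∃ j : Fin (d + 1), j ≠ 0 ∧ j ≠ Fin.last d ∧ y = x j})
    (hmin : ∀ y ∈ Set.Ico (0 : ℝ) 1, ∀ z ∈ Set.Ico (0 : ℝ) 1, ∀ ε > (0 : ℝ),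
      ∃ n : ℕ, |F^[n] y - z| < ε)
    (Dp Dm : ℕ → Set ℝ)
    (hDp : ∀ n : ℕ, Dp n =
      F^[n] '' ((Set.range fun i : Fin d => F (x i.castSucc)) \ {0}))
    (hDm : ∀ n : ℕ, Dm n =
      G^[n] '' {y : ℝ | ∃ j : Fin (d + 1), j ≠ 0 ∧ j ≠ Fin.last d ∧ y = x j})
    (ρ : Measure ℝ)
    (hρ : ρ = Measure.sum fun n : ℕ =>
      ((2 : ENNReal)⁻¹) ^ n • Measure.count.restrict (Dp n ∪ Dm n))
    (l r : ℝ → ℝ)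
    (hl : ∀ y : ℝ, l y = (ρ (Set.Ico 0 y)).toReal)
    (hr : ∀ y : ℝ, r y = (ρ (Set.Icc 0 y)).toReal)
    (K : Set ℝ) (hK : K = l '' Set.Ioc 0 1 ∪ r '' Set.Ico 0 1)
    (mK : Measure ℝ)
    (hmK : mK = Measure.map l (volume.restrict (Set.Ico 0 1))) :
    (∀ y ∈ K, mK {y} = 0) ∧
    (∀ T : K ≃ₜ K,
      (∀ (p : K) (y : ℝ), y ∈ Set.Ioo (0 : ℝ) 1 → (p : ℝ) = l y →
        (T p : ℝ) = l (F y)) →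
      ∀ B : Set ℝ, MeasurableSet B → B ⊆ K →
        mK (Subtype.val '' (⇑T ⁻¹' (Subtype.val ⁻¹' B))) = mK B) := by
  classical
  choose c hc using htrans
  set I : Fin d → Set ℝ := fun i => Set.Ico (x i.castSucc) (x i.succ) with hIdef
  set J : Fin d → Set ℝ := fun i => Set.Ico (x i.castSucc + c i) (x i.succ + c i) with hJdef
  -- basic facts about breakpoints
  have hxmem : ∀ i : Fin d, x i.castSucc ∈ Set.Ico (0:ℝ) 1 := by
    intro i
    constructor
    · rw [← hx0]; exact hxmono.monotone (Fin.zero_le _)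
    · rw [← hxd]; exact hxmono (Fin.castSucc_lt_last i)
  have hIsub : ∀ i, I i ⊆ Set.Ico (0:ℝ) 1 := by
    intro i z hz
    constructor
    · exact le_trans (hxmem i).1 hz.1
    · exact lt_of_lt_of_le hz.2 (by rw [← hxd]; exact hxmono.monotone (Fin.le_last _))
  have hIunion : (⋃ i, I i) = Set.Ico (0:ℝ) 1 := by
    apply Set.Subset.antisymm
    · exact Set.iUnion_subset hIsub
    · intro z hz
      have h0 : (0 : Fin (d+1)) ∈ Finset.univ.filter (fun j : Fin (d+1) => x j ≤ z) := by
        simp [hx0, hz.1]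
      set s := Finset.univ.filter (fun j : Fin (d+1) => x j ≤ z) with hs
      have hne : s.Nonempty := ⟨0, h0⟩
      set i₀ := s.max' hne with hi₀
      have hi₀mem : i₀ ∈ s := s.max'_mem hne
      have hxi₀ : x i₀ ≤ z := by simpa [hs] using hi₀mem
      have hi₀lt : (i₀ : ℕ) < d := by
        by_contra h
        have hval : (i₀ : ℕ) = d := by have := i₀.isLt; omega
        have : i₀ = Fin.last d := Fin.ext (by simp [hval])
        rw [this, hxd] at hxi₀
        exact absurd hz.2 (not_lt.2 hxi₀)
      refine Set.mem_iUnion.2 ⟨⟨(i₀ : ℕ), hi₀lt⟩, ?_, ?_⟩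
      · simpa using hxi₀
      · show z < x (Fin.succ _)
        by_contra h
        push_neg at h
        have hmem : Fin.succ (⟨(i₀ : ℕ), hi₀lt⟩ : Fin d) ∈ s := by
          simp only [hs, Finset.mem_filter, Finset.mem_univ, true_and]
          exact h
        have hle2 := s.le_max' _ hmem
        rw [← hi₀] at hle2
        have : (i₀ : ℕ) + 1 ≤ (i₀ : ℕ) := hle2
        omega
  have hIdisjkey : ∀ i j : Fin d, i < j → Disjoint (I i) (I j) := by
    intro i j hlt
    have hle : x i.succ ≤ x j.castSucc := hxmono.monotone (Fin.succ_le_castSucc_iff.2 hlt)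
    rw [Set.disjoint_left]
    intro z hz hz'
    exact absurd (lt_of_lt_of_le hz.2 (le_trans hle hz'.1)) (lt_irrefl z)
  have hIdisj : Pairwise (Function.onFun Disjoint I) := by
    intro i j hij
    rcases hij.lt_or_gt with h | h
    · exact hIdisjkey _ _ h
    · exact (hIdisjkey _ _ h).symm
  have hJim : ∀ i, F '' I i = J i := by
    intro i
    have : F '' I i = (fun y => y + c i) '' I i := Set.image_congr (hc i)
    rw [this, hIdef, hJdef]
    exact Set.image_add_const_Ico (c i) _ _
  have hJunion : (⋃ i, J i) = Set.Ico (0:ℝ) 1 := by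
    calc (⋃ i, J i) = ⋃ i, F '' I i := by simp [hJim]
      _ = F '' ⋃ i, I i := (Set.image_iUnion).symm
      _ = F '' Set.Ico 0 1 := by rw [hIunion]
      _ = Set.Ico 0 1 := hbij.image_eq
  have hJdisj : Pairwise (Function.onFun Disjoint J) := by
    intro i j hij
    have := hIdisj hij
    rw [Function.onFun, ← hJim, ← hJim]
    exact Disjoint.image this hbij.injOn (hIsub i) (hIsub j)
  -- measure preservation of F on [0,1)
  have hpre : ∀ S : Set ℝ, F ⁻¹' S ∩ Set.Ico 0 1 = ⋃ i, ((fun y => y + c i) ⁻¹' S ∩ I i) := by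
    intro S
    ext z
    simp only [Set.mem_inter_iff, Set.mem_preimage, Set.mem_iUnion, ← hIunion]
    constructor
    · rintro ⟨hzS, hz⟩
      obtain ⟨i, hi⟩ := hz
      exact ⟨i, by rwa [← hc i z hi], hi⟩
    · rintro ⟨i, hzS, hzi⟩
      exact ⟨by rwa [hc i z hzi], ⟨i, hzi⟩⟩
  have hImeas : ∀ i, MeasurableSet (I i) := fun i => measurableSet_Ico
  have hJmeas : ∀ i, MeasurableSet (J i) := fun i => measurableSet_Ico
  have hpiece : ∀ (S : Set ℝ) (i : Fin d), (fun y => y + c i) ⁻¹' S ∩ I i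
      = (fun y => y + c i) ⁻¹' (S ∩ J i) := by
    intro S i
    rw [Set.preimage_inter]
    congr 1
    ext z
    simp only [Set.mem_preimage, hIdef, hJdef, Set.mem_Ico]
    constructor
    · rintro ⟨h1, h2⟩; exact ⟨by linarith, by linarith⟩
    · rintro ⟨h1, h2⟩; exact ⟨by linarith, by linarith⟩
  have hFmeas : ∀ S : Set ℝ, MeasurableSet S → MeasurableSet (F ⁻¹' S ∩ Set.Ico 0 1) := by
    intro S hS
    rw [hpre S]
    exact MeasurableSet.iUnion fun i =>
      (hS.preimage (measurable_add_const (c i))).inter (hImeas i)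
  have hpres : ∀ S : Set ℝ, MeasurableSet S →
      volume (F ⁻¹' S ∩ Set.Ico 0 1) = volume (S ∩ Set.Ico 0 1) := by
    intro S hS
    rw [hpre S]
    have hterm : ∀ i, MeasurableSet ((fun y => y + c i) ⁻¹' S ∩ I i) :=
      fun i => (hS.preimage (measurable_add_const (c i))).inter (hImeas i)
    have hdisj2 : Pairwise (Function.onFun Disjoint
        (fun i => (fun y => y + c i) ⁻¹' S ∩ I i)) := by
      intro i j hij
      exact (hIdisj hij).mono Set.inter_subset_right Set.inter_subset_right
    rw [measure_iUnion hdisj2 hterm]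
    have hterm2 : ∀ i, volume ((fun y => y + c i) ⁻¹' S ∩ I i) = volume (S ∩ J i) := by
      intro i
      rw [hpiece S i]
      exact measure_preimage_add_right volume (c i) _
    simp_rw [hterm2]
    have hdisj3 : Pairwise (Function.onFun Disjoint (fun i => S ∩ J i)) := by
      intro i j hij
      exact (hJdisj hij).mono Set.inter_subset_right Set.inter_subset_right
    rw [← measure_iUnion hdisj3 (fun i => hS.inter (hJmeas i)), ← Set.inter_iUnion, hJunion]
  -- finiteness of ρ
  have hDpfin : ∀ n, (Dp n).Finite := by
    intro n
    rw [hDp n]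
    exact (((Set.finite_range _).diff).image _)
  have hbreakfin : {y : ℝ | ∃ j : Fin (d + 1), j ≠ 0 ∧ j ≠ Fin.last d ∧ y = x j}.Finite := by
    apply (Set.finite_range x).subset
    rintro y ⟨j, -, -, rfl⟩
    exact ⟨j, rfl⟩
  have hDmfin : ∀ n, (Dm n).Finite := by
    intro n
    rw [hDm n]
    exact hbreakfin.image _
  have hcard : ∀ n, Measure.count (Dp n ∪ Dm n) ≤ ((2 * d + 1 : ℕ) : ENNReal) := by
    intro n
    have hfin := (hDpfin n).union (hDmfin n)
    rw [Measure.count_apply_finite _ hfin]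
    have h1 : (Dp n ∪ Dm n).ncard ≤ 2 * d + 1 := by
      have hup : (Dp n).ncard ≤ d := by
        rw [hDp n]
        calc (F^[n] '' ((Set.range fun i : Fin d => F (x i.castSucc)) \ {0})).ncard
            ≤ ((Set.range fun i : Fin d => F (x i.castSucc)) \ {0}).ncard :=
              Set.ncard_image_le ((Set.finite_range _).diff)
          _ ≤ (Set.range fun i : Fin d => F (x i.castSucc)).ncard :=
              Set.ncard_le_ncard Set.diff_subset (Set.finite_range _)
          _ ≤ d := by
              rw [← Set.image_univ]
              calc ((fun i : Fin d => F (x i.castSucc)) '' Set.univ).ncard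
                  ≤ (Set.univ : Set (Fin d)).ncard := Set.ncard_image_le Set.finite_univ
                _ = d := by rw [Set.ncard_univ]; simp
      have hum : (Dm n).ncard ≤ d + 1 := by
        rw [hDm n]
        calc (G^[n] '' {y : ℝ | ∃ j : Fin (d + 1), j ≠ 0 ∧ j ≠ Fin.last d ∧ y = x j}).ncard
            ≤ {y : ℝ | ∃ j : Fin (d + 1), j ≠ 0 ∧ j ≠ Fin.last d ∧ y = x j}.ncard :=
              Set.ncard_image_le hbreakfin
          _ ≤ (Set.range x).ncard := Set.ncard_le_ncard
              (by rintro y ⟨j, -, -, rfl⟩; exact ⟨j, rfl⟩) (Set.finite_range x)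
          _ ≤ d + 1 := by
              rw [← Set.image_univ]
              calc (x '' Set.univ).ncard ≤ (Set.univ : Set (Fin (d+1))).ncard :=
                  Set.ncard_image_le Set.finite_univ
                _ = d + 1 := by rw [Set.ncard_univ]; simp
      calc (Dp n ∪ Dm n).ncard ≤ (Dp n).ncard + (Dm n).ncard := Set.ncard_union_le _ _
        _ ≤ d + (d + 1) := Nat.add_le_add hup hum
        _ = 2 * d + 1 := by ring
    calc (hfin.toFinset.card : ENNReal) = ((Dp n ∪ Dm n).ncard : ENNReal) := by
          rw [Set.ncard_eq_toFinset_card _ hfin]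
      _ ≤ ((2 * d + 1 : ℕ) : ENNReal) := by exact_mod_cast Nat.cast_le.2 h1
  have hρfin : ρ Set.univ ≠ ⊤ := by
    rw [hρ, Measure.sum_apply _ MeasurableSet.univ]
    have hbound : ∀ n : ℕ, (((2:ENNReal)⁻¹) ^ n • Measure.count.restrict (Dp n ∪ Dm n)) Set.univ
        ≤ ((2:ENNReal)⁻¹) ^ n * ((2 * d + 1 : ℕ) : ENNReal) := by
      intro n
      rw [Measure.smul_apply, smul_eq_mul, Measure.restrict_apply MeasurableSet.univ,
        Set.univ_inter]
      exact mul_le_mul_right (hcard n) _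
    have hlt : (∑' n : ℕ, (((2:ENNReal)⁻¹) ^ n • Measure.count.restrict (Dp n ∪ Dm n)) Set.univ)
        ≤ 2 * ((2 * d + 1 : ℕ) : ENNReal) := by
      calc _ ≤ ∑' n : ℕ, ((2:ENNReal)⁻¹) ^ n * ((2 * d + 1 : ℕ) : ENNReal) :=
            ENNReal.tsum_le_tsum hbound
        _ = (∑' n : ℕ, ((2:ENNReal)⁻¹) ^ n) * ((2 * d + 1 : ℕ) : ENNReal) :=
            ENNReal.tsum_mul_right
        _ = 2 * ((2 * d + 1 : ℕ) : ENNReal) := by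
            rw [ENNReal.tsum_geometric, ENNReal.one_sub_inv_two, inv_inv]
    intro htop
    rw [htop] at hlt
    exact absurd hlt (by simp [ENNReal.mul_eq_top])
  have hρne : ∀ s : Set ℝ, ρ s ≠ ⊤ :=
    fun s => ne_top_of_le_ne_top hρfin (measure_mono (Set.subset_univ s))
  -- a nonzero element of the base of Dp
  have hy1 : ∃ i : Fin d, F (x i.castSucc) ≠ 0 := by
    by_contra h
    push_neg at h
    rcases Nat.lt_or_ge d 2 with hd1 | hd2
    · -- d = 1 : F is the identity on [0,1), contradicting minimality
      have hii : ∀ z ∈ Set.Ico (0:ℝ) 1, F z = z := by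
        intro z hz
        have hd1' : d = 1 := by omega
        set i0 : Fin d := ⟨0, hd⟩ with hi0
        have hc0 : x i0.castSucc = 0 := by
          rw [← hx0]; congr 1
        have hs1 : i0.succ = Fin.last d := by
          apply Fin.ext; simp [hi0, Fin.val_last, hd1']
        have hzI : z ∈ I i0 := by
          simp only [hIdef, Set.mem_Ico, hc0, hs1, hxd]
          exact hz
        have hF0 : F 0 = 0 := by
          have := h i0
          rwa [hc0] at this
        have hcz : c i0 = 0 := by
          have h0I : (0:ℝ) ∈ I i0 := by
            simp only [hIdef, Set.mem_Ico, hc0, hs1, hxd]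
            exact ⟨le_refl _, zero_lt_one⟩
          have := hc i0 0 h0I
          rw [hF0] at this
          linarith
        rw [hc i0 z hzI, hcz, add_zero]
      have hiter : ∀ n : ℕ, F^[n] 0 = 0 := by
        intro n
        induction n with
        | zero => rfl
        | succ k ih => rw [Function.iterate_succ_apply', ih,
            hii 0 ⟨le_refl _, zero_lt_one⟩]
      obtain ⟨n, hn⟩ := hmin 0 ⟨le_refl _, zero_lt_one⟩ (1/2) ⟨by norm_num, by norm_num⟩
        (1/2) (by norm_num)
      rw [hiter n] at hn
      rw [abs_lt] at hn
      linarith [hn.1]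
    · -- d ≥ 2 : two distinct points with the same image, contradicting injectivity
      set i0 : Fin d := ⟨0, by omega⟩ with hi0
      set i1 : Fin d := ⟨1, by omega⟩ with hi1
      have heq : x i0.castSucc = x i1.castSucc := by
        apply hbij.injOn (hxmem i0) (hxmem i1)
        rw [h i0, h i1]
      have : i0.castSucc = i1.castSucc := hxmono.injective heq
      simp [hi0, hi1, Fin.ext_iff] at this
  obtain ⟨i₁, hi₁⟩ := hy1
  set y₁ := F (x i₁.castSucc) with hy₁def
  have hy₁mem : y₁ ∈ Set.Ico (0:ℝ) 1 := hbij.mapsTo (hxmem i₁)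
  have hyD : ∀ n, F^[n] y₁ ∈ Dp n := by
    intro n
    rw [hDp n]
    exact ⟨y₁, ⟨⟨i₁, rfl⟩, hi₁⟩, rfl⟩
  -- density of the support of ρ
  have hdense : ∀ a b : ℝ, 0 ≤ a → a < b → b ≤ 1 → 0 < ρ (Set.Ioo a b) := by
    intro a b ha hab hb1
    obtain ⟨n, hn⟩ := hmin y₁ hy₁mem ((a+b)/2) ⟨by linarith, by linarith⟩
      ((b-a)/2) (by linarith)
    have hpt : F^[n] y₁ ∈ Set.Ioo a b := by
      rw [abs_lt] at hn
      exact ⟨by linarith [hn.1], by linarith [hn.2]⟩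
    have hstep : (((2:ENNReal)⁻¹) ^ n • Measure.count.restrict (Dp n ∪ Dm n)) (Set.Ioo a b)
        ≤ ρ (Set.Ioo a b) := by
      rw [hρ]
      exact Measure.le_iff'.1 (Measure.le_sum _ n) _
    refine lt_of_lt_of_le ?_ hstep
    rw [Measure.smul_apply, smul_eq_mul, Measure.restrict_apply measurableSet_Ioo]
    apply ENNReal.mul_pos
    · exact pow_ne_zero n (ENNReal.inv_ne_zero.2 ENNReal.ofNat_ne_top)
    · have hsub : ({F^[n] y₁} : Set ℝ) ⊆ Set.Ioo a b ∩ (Dp n ∪ Dm n) := by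
        rw [Set.singleton_subset_iff]
        exact ⟨hpt, Or.inl (hyD n)⟩
      have : (1:ENNReal) ≤ Measure.count (Set.Ioo a b ∩ (Dp n ∪ Dm n)) := by
        calc (1:ENNReal) = Measure.count ({F^[n] y₁} : Set ℝ) :=
            (Measure.count_singleton _).symm
          _ ≤ _ := measure_mono hsub
      intro h0
      rw [h0] at this
      exact absurd this (by norm_num)
  -- monotonicity and strict monotonicity of l and r
  have hlmono : Monotone l := by
    intro a b hab
    rw [hl a, hl b]
    exact ENNReal.toReal_mono (hρne _) (measure_mono (Set.Ico_subset_Ico_right hab))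
  have hlmeas : Measurable l := hlmono.measurable
  have hrmono : Monotone r := by
    intro a b hab
    rw [hr a, hr b]
    exact ENNReal.toReal_mono (hρne _) (measure_mono (Set.Icc_subset_Icc_right hab))
  have hrmeas : Measurable r := hrmono.measurable
  have hlstrict : ∀ a b : ℝ, 0 ≤ a → a < b → b ≤ 1 → l a < l b := by
    intro a b ha hab hb
    rw [hl a, hl b]
    apply ENNReal.toReal_strict_mono (hρne _)
    have hsub : Set.Ico 0 a ∪ Set.Ioo a b ⊆ Set.Ico 0 b := by
      intro z hz
      rcases hz with hz | hz
      · exact ⟨hz.1, lt_trans hz.2 hab⟩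
      · exact ⟨le_trans ha (le_of_lt hz.1), hz.2⟩
    have hdisjoint : Disjoint (Set.Ico 0 a) (Set.Ioo a b) := by
      rw [Set.disjoint_left]
      intro z hz hz'
      exact absurd (lt_trans hz.2 hz'.1) (lt_irrefl z)
    calc ρ (Set.Ico 0 a) < ρ (Set.Ico 0 a) + ρ (Set.Ioo a b) :=
        ENNReal.lt_add_right (hρne _) (ne_of_gt (hdense a b ha hab hb))
      _ = ρ (Set.Ico 0 a ∪ Set.Ioo a b) := (measure_union hdisjoint measurableSet_Ioo).symm
      _ ≤ ρ (Set.Ico 0 b) := measure_mono hsub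
  have hrstrict : ∀ a b : ℝ, 0 ≤ a → a < b → b ≤ 1 → r a < r b := by
    intro a b ha hab hb
    rw [hr a, hr b]
    apply ENNReal.toReal_strict_mono (hρne _)
    have hsub : Set.Icc 0 a ∪ Set.Ioo a b ⊆ Set.Icc 0 b := by
      intro z hz
      rcases hz with hz | hz
      · exact ⟨hz.1, le_trans hz.2 (le_of_lt hab)⟩
      · exact ⟨le_trans ha (le_of_lt hz.1), le_of_lt hz.2⟩
    have hdisjoint : Disjoint (Set.Icc 0 a) (Set.Ioo a b) := by
      rw [Set.disjoint_left]
      intro z hz hz'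
      exact absurd (lt_of_le_of_lt hz.2 hz'.1) (lt_irrefl z)
    calc ρ (Set.Icc 0 a) < ρ (Set.Icc 0 a) + ρ (Set.Ioo a b) :=
        ENNReal.lt_add_right (hρne _) (ne_of_gt (hdense a b ha hab hb))
      _ = ρ (Set.Icc 0 a ∪ Set.Ioo a b) := (measure_union hdisjoint measurableSet_Ioo).symm
      _ ≤ ρ (Set.Icc 0 b) := measure_mono hsub
  -- injectivity of l and r, measurability of K
  have hlinj : Set.InjOn l (Set.Ioc 0 1) := by
    intro a ha b hb hab
    by_contra hne
    rcases lt_or_gt_of_ne hne with h | h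
    · exact absurd hab (ne_of_lt (hlstrict a b (le_of_lt ha.1) h hb.2))
    · exact absurd hab.symm (ne_of_lt (hlstrict b a (le_of_lt hb.1) h ha.2))
  have hrinj : Set.InjOn r (Set.Ico 0 1) := by
    intro a ha b hb hab
    by_contra hne
    rcases lt_or_gt_of_ne hne with h | h
    · exact absurd hab (ne_of_lt (hrstrict a b ha.1 h (le_of_lt hb.2)))
    · exact absurd hab.symm (ne_of_lt (hrstrict b a hb.1 h (le_of_lt ha.2)))
  have hKmeas : MeasurableSet K := by
    rw [hK]
    exact (measurableSet_Ioc.image_of_measurable_injOn hlmeas hlinj).union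
      (measurableSet_Ico.image_of_measurable_injOn hrmeas hrinj)
  constructor
  · -- part (a) : no atoms
    intro y hy
    rw [hmK, Measure.map_apply hlmeas (measurableSet_singleton y),
      Measure.restrict_apply (hlmeas (measurableSet_singleton y))]
    have hsub : (l ⁻¹' {y} ∩ Set.Ico 0 1).Subsingleton := by
      intro a ha b hb
      by_contra hne
      have hay : l a = y := Set.mem_singleton_iff.1 ha.1
      have hby : l b = y := Set.mem_singleton_iff.1 hb.1
      rcases lt_or_gt_of_ne hne with h | h
      · have := hlstrict a b ha.2.1 h (le_of_lt hb.2.2)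
        rw [hay, hby] at this
        exact absurd this (lt_irrefl y)
      · have := hlstrict b a hb.2.1 h (le_of_lt ha.2.2)
        rw [hay, hby] at this
        exact absurd this (lt_irrefl y)
    exact hsub.measure_zero volume
  · -- part (b) : invariance under T
    intro T hT B hBmeas hBK
    set A := Subtype.val '' (⇑T ⁻¹' (Subtype.val ⁻¹' B)) with hA
    have hBsub : MeasurableSet (Subtype.val ⁻¹' B : Set K) :=
      hBmeas.preimage measurable_subtype_coe
    have hTm : MeasurableSet (⇑T ⁻¹' (Subtype.val ⁻¹' B) : Set K) :=
      hBsub.preimage T.measurable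
    have hAmeas : MeasurableSet A := hKmeas.subtype_image hTm
    have h01 : ∀ X : Set ℝ, volume (X ∩ Set.Ico 0 1) = volume (X ∩ Set.Ioo 0 1) := by
      intro X
      have hsub01 : X ∩ Set.Ico 0 1 ⊆ (X ∩ Set.Ioo 0 1) ∪ {0} := by
        rintro z ⟨hzx, hz0, hz1⟩
        rcases eq_or_lt_of_le hz0 with h | h
        · exact Or.inr (by simp [← h])
        · exact Or.inl ⟨hzx, h, hz1⟩
      apply le_antisymm
      · calc volume (X ∩ Set.Ico 0 1) ≤ volume ((X ∩ Set.Ioo 0 1) ∪ {0}) :=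
            measure_mono hsub01
          _ ≤ volume (X ∩ Set.Ioo 0 1) + volume ({0} : Set ℝ) := measure_union_le _ _
          _ = volume (X ∩ Set.Ioo 0 1) := by rw [Real.volume_singleton, add_zero]
      · exact measure_mono (Set.inter_subset_inter_right X Set.Ioo_subset_Ico_self)
    have hkey : l ⁻¹' A ∩ Set.Ioo 0 1 = F ⁻¹' (l ⁻¹' B) ∩ Set.Ioo 0 1 := by
      ext z
      simp only [Set.mem_inter_iff, Set.mem_preimage]
      constructor
      · rintro ⟨hzA, hz⟩
        obtain ⟨p, hp, hpval⟩ := hzA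
        have hTp := hT p z hz hpval
        refine ⟨?_, hz⟩
        show l (F z) ∈ B
        rw [← hTp]
        exact hp
      · rintro ⟨hzB, hz⟩
        have hlzK : l z ∈ K := by
          rw [hK]
          exact Or.inl ⟨z, ⟨hz.1, le_of_lt hz.2⟩, rfl⟩
        refine ⟨⟨⟨l z, hlzK⟩, ?_, rfl⟩, hz⟩
        show (T ⟨l z, hlzK⟩ : ℝ) ∈ B
        rw [hT ⟨l z, hlzK⟩ z hz rfl]
        exact hzB
    rw [hmK, Measure.map_apply hlmeas hAmeas, Measure.map_apply hlmeas hBmeas,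
      Measure.restrict_apply (hlmeas hAmeas), Measure.restrict_apply (hlmeas hBmeas)]
    calc volume (l ⁻¹' A ∩ Set.Ico 0 1) = volume (l ⁻¹' A ∩ Set.Ioo 0 1) := h01 _
      _ = volume (F ⁻¹' (l ⁻¹' B) ∩ Set.Ioo 0 1) := by rw [hkey]
      _ = volume (F ⁻¹' (l ⁻¹' B) ∩ Set.Ico 0 1) := (h01 _).symm
      _ = volume (l ⁻¹' B ∩ Set.Ico 0 1) := hpres _ (hlmeas hBmeas)
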